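/- Effect-domination ambiguity is unavoidable for non-parametric models (Theorem 8.2). Let G be a DAG on [d] and 𝔈 a finite set of environments with a partition 𝔈 = ⋃_{i=1}^d 𝔈_i. Suppose given, for each E ∈ 𝔈, a probability density p_E(z) = ∏_{i=1}^d p_i^E(z_i | z_{pa_G(i)}) on ℝ^d such that: (i) all factors p_i^E are continuously differentiable and p_E is positive everywhere; (ii) each group 𝔈_i is a set of single-node soft interventions on node i: for any two distinct E₁, E₂ ∈ 𝔈_i and any j ∈ [d], p_j^{E₁} = p_j^{E₂} if and only if j ≠ i; (iii) for each i ∈ [d], the family {p_i^E : E ∈ 𝔈_i} is non-degenerate on node i at every point ẑ ∈ ℝ^d. Then there exists a diffeomorphism m : ℝ^d → ℝ^d such that the densities q_E of v = m(z), determined by q_E(m(z))·|det J_m(z)| = p_E(z), satisfy: (i′) each q_E factorizes over the SAME graph G as q_E(v) = ∏_{i=1}^d q_i^E(v_i | v_{pa_G(i)}) with all factors continuously differentiable and q_E positive everywhere; (ii′) for the same partition, each 𝔈_i is a set of single-node soft interventions on node i for the q-model; (iii′) for each i, {q_i^E : E ∈ 𝔈_i} is non-degenerate on node i at every point of ℝ^d;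 and yet (iv) for every i ∈ [d] and every j ∈ \bar{dom}_G(i), the partial derivative ∂m_i/∂z_j is nonzero (at every point of ℝ^d). -/

import Mathlib

open Matrix MeasureTheory

/-- `E i j` means there is a directed edge `i → j`. A DAG has no directed cycles. -/
def IsDAG {d : ℕ} (E : Fin d → Fin d → Prop) : Prop :=
  ∀ i, ¬ Relation.TransGen E i i

/-- The set of parents of `i`. -/
def pa {d : ℕ} (E : Fin d → Fin d → Prop) (i : Fin d) : Set (Fin d) := {j | E j i}

/-- The set of children of `i`. -/
def ch {d : ℕ} (E : Fin d → Fin d → Prop) (i : Fin d) : Set (Fin d) := {j | E i j}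

/-- `pa_G(i) ∪ {i}`. -/
def barPa {d : ℕ} (E : Fin d → Fin d → Prop) (i : Fin d) : Set (Fin d) := insert i (pa E i)

/-- `ch_G(i) ∪ {i}`. -/
def barCh {d : ℕ} (E : Fin d → Fin d → Prop) (i : Fin d) : Set (Fin d) := insert i (ch E i)

/-- The effect-domination set `dom_G(i) = {j ∈ pa_G(i) : ch_G(i) ⊆ ch_G(j)}`. -/
def domSet {d : ℕ} (E : Fin d → Fin d → Prop) (i : Fin d) : Set (Fin d) :=
  {j | j ∈ pa E i ∧ ch E i ⊆ ch E j}

/-- `dom_G(i) ∪ {i}`. -/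
def barDom {d : ℕ} (E : Fin d → Fin d → Prop) (i : Fin d) : Set (Fin d) :=
  insert i (domSet E i)

/-- Ancestors of `i`: nodes with a directed path to `i`. -/
def ans {d : ℕ} (E : Fin d → Fin d → Prop) (i : Fin d) : Set (Fin d) :=
  {j | Relation.TransGen E j i}

/-- A set is ancestral if it is closed under taking ancestors. -/
def Ancestral {d : ℕ} (E : Fin d → Fin d → Prop) (S : Set (Fin d)) : Prop :=
  ∀ j ∈ S, ans E j ⊆ S

/-- The support of `B` matches the graph: `B i j ≠ 0 ↔ j ∈ \bar{pa}_G(i)`. -/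
def SupportMatches {d : ℕ} (E : Fin d → Fin d → Prop) (B : Matrix (Fin d) (Fin d) ℝ) : Prop :=
  ∀ i j, B i j ≠ 0 ↔ j ∈ barPa E i

/-- Node-level non-degeneracy: for every node `i`, the span of the `i`-th rows
`(B_k)_i` has dimension `|pa_G(i)| + 1`. -/
def NodeNonDegenerate {d K : ℕ} (E : Fin d → Fin d → Prop)
    (B : Fin K → Matrix (Fin d) (Fin d) ℝ) : Prop :=
  ∀ i, Module.finrank ℝ (Submodule.span ℝ (Set.range fun k => B k i)) = (pa E i).ncard + 1

/-- A function `f : ℝ^d → ℝ` depends only on the coordinates in `S`. -/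
def DependsOnlyOn {d : ℕ} (S : Set (Fin d)) (f : (Fin d → ℝ) → ℝ) : Prop :=
  ∀ z z' : Fin d → ℝ, (∀ j ∈ S, z j = z' j) → f z = f z'

/-- Non-degeneracy (Definition 7.1) of a family of conditional densities at node `i`
at the point `ẑ`, with distinguished base density `p e₀`: all densities are positive
at `ẑ`, and the matrix `[∂(p_{e₀}/p_e)/∂z_j]` (rows `e`, columns `j ∈ \bar{pa}_G(i)`)
has full column rank, i.e. its rows span all of `ℝ^{\bar{pa}_G(i)}`. -/
def NonDegenerateAt {d : ℕ} {ι : Type*} (E : Fin d → Fin d → Prop) (i : Fin d)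
    (p : ι → (Fin d → ℝ) → ℝ) (e₀ : ι) (zhat : Fin d → ℝ) : Prop :=
  (∀ e, 0 < p e zhat) ∧
  Submodule.span ℝ (Set.range fun e : ι =>
      fun j : barPa E i =>
        fderiv ℝ (fun z => p e₀ z / p e z) zhat (Pi.single (j : Fin d) 1)) = ⊤

section AuxNP

open Matrix

variable {d : ℕ} (E : Fin d → Fin d → Prop)

/-- rank of a node: number of ancestors. -/
noncomputable def npRank (i : Fin d) : ℕ := (ans E i).ncard

lemma npRank_lt (hG : IsDAG E) {j k : Fin d} (h : E j k) : npRank E j < npRank E k := by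
  have hsub : ans E j ⊆ ans E k := fun x hx => Relation.TransGen.tail hx h
  have hjk : j ∈ ans E k := Relation.TransGen.single h
  have hjj : j ∉ ans E j := hG j
  exact Set.ncard_lt_ncard ((Set.ssubset_iff_of_subset hsub).mpr ⟨j, hjk, hjj⟩) (Set.toFinite _)

lemma npRank_le (i : Fin d) : npRank E i ≤ d := by
  have := Set.ncard_le_ncard (Set.subset_univ (ans E i)) (Set.toFinite _)
  simpa [npRank, Set.ncard_univ] using this

open Classical in
/-- the perturbation matrix supported on the effect-domination sets. -/
noncomputable def Cmat : Matrix (Fin d) (Fin d) ℝ :=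
  fun i j => if j ∈ domSet E i then 1 else 0

lemma Cmat_ne_zero_iff {i j : Fin d} : Cmat E i j ≠ 0 ↔ j ∈ domSet E i := by
  unfold Cmat; split <;> simp_all

lemma no_self_edge (hG : IsDAG E) (i : Fin d) : ¬ E i i :=
  fun h => hG i (Relation.TransGen.single h)

lemma closure_dom {i k j : Fin d} (hk : k ∈ barPa E i) (hj : j ∈ domSet E k) :
    j ∈ barPa E i := by
  rcases hk with hk | hk
  · subst hk; exact Set.mem_insert_of_mem _ hj.1
  · exact Set.mem_insert_of_mem _ (hj.2 hk)

lemma closure_Cpow (n : ℕ) {i k j : Fin d} (hk : k ∈ barPa E i)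
    (h : ((Cmat E) ^ n) k j ≠ 0) : j ∈ barPa E i := by
  induction n generalizing k j with
  | zero =>
    simp only [pow_zero, Matrix.one_apply, ne_eq, ite_eq_right_iff, not_forall] at h
    exact h.1 ▸ hk
  | succ n ih =>
    rw [pow_succ, Matrix.mul_apply] at h
    obtain ⟨l, _, hl⟩ := Finset.exists_ne_zero_of_sum_ne_zero h
    have h1 : ((Cmat E) ^ n) k l ≠ 0 := fun h0 => hl (by rw [h0, zero_mul])
    have h2 : Cmat E l j ≠ 0 := fun h0 => hl (by rw [h0, mul_zero])
    exact closure_dom E (ih hk h1) (Cmat_ne_zero_iff E |>.mp h2)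

lemma Cpow_rank (hG : IsDAG E) (n : ℕ) {i j : Fin d}
    (h : ((Cmat E) ^ n) i j ≠ 0) : npRank E j + n ≤ npRank E i := by
  induction n generalizing i j with
  | zero =>
    simp only [pow_zero, Matrix.one_apply, ne_eq, ite_eq_right_iff, not_forall] at h
    obtain ⟨rfl, -⟩ := h
    omega
  | succ n ih =>
    rw [pow_succ, Matrix.mul_apply] at h
    obtain ⟨l, _, hl⟩ := Finset.exists_ne_zero_of_sum_ne_zero h
    have h1 : ((Cmat E) ^ n) i l ≠ 0 := fun h0 => hl (by rw [h0, zero_mul])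
    have h2 : Cmat E l j ≠ 0 := fun h0 => hl (by rw [h0, mul_zero])
    have h3 : E j l := ((Cmat_ne_zero_iff E).mp h2).1
    have := npRank_lt E hG h3
    have := ih h1
    omega

lemma Cpow_eq_zero (hG : IsDAG E) : (Cmat E) ^ (d + 1) = 0 := by
  ext i j
  by_contra h
  have h1 := Cpow_rank E hG (d + 1) h
  have h2 := npRank_le E i
  omega

/-- inverse of `1 + Cmat` as a geometric series. -/
noncomputable def Nmat : Matrix (Fin d) (Fin d) ℝ :=
  ∑ t ∈ Finset.range (d + 1), (-(Cmat E)) ^ t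

lemma Nmat_mul (hG : IsDAG E) : Nmat E * (1 + Cmat E) = 1 := by
  have h := geom_sum_mul (-(Cmat E)) (d + 1)
  have h2 : (-(Cmat E)) ^ (d + 1) = 0 := by
    rw [show -(Cmat E) = (-1 : ℝ) • Cmat E by simp, smul_pow, Cpow_eq_zero E hG, smul_zero]
  rw [h2, zero_sub] at h
  have h4 : Nmat E * (1 + Cmat E) = -(Nmat E * (-(Cmat E) - 1)) := by
    rw [← mul_neg]; congr 1; abel
  rw [h4, show Nmat E = ∑ t ∈ Finset.range (d + 1), (-(Cmat E)) ^ t from rfl, h, neg_neg]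

lemma mul_Nmat (hG : IsDAG E) : (1 + Cmat E) * Nmat E = 1 := by
  have h := mul_geom_sum (-(Cmat E)) (d + 1)
  have h2 : (-(Cmat E)) ^ (d + 1) = 0 := by
    rw [show -(Cmat E) = (-1 : ℝ) • Cmat E by simp, smul_pow, Cpow_eq_zero E hG, smul_zero]
  rw [h2, zero_sub] at h
  have h4 : (1 + Cmat E) * Nmat E = -((-(Cmat E) - 1) * Nmat E) := by
    rw [← neg_mul]; congr 1; abel
  rw [h4, show Nmat E = ∑ t ∈ Finset.range (d + 1), (-(Cmat E)) ^ t from rfl, h, neg_neg]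

lemma closure_N {i k j : Fin d} (hk : k ∈ barPa E i) (h : Nmat E k j ≠ 0) :
    j ∈ barPa E i := by
  by_contra hj
  apply h
  have : ∀ t, ((-(Cmat E)) ^ t) k j = 0 := by
    intro t
    rw [show -(Cmat E) = (-1 : ℝ) • Cmat E by simp, smul_pow, Matrix.smul_apply]
    have : ((Cmat E) ^ t) k j = 0 := by
      by_contra h0; exact hj (closure_Cpow E t hk h0)
    rw [this, smul_zero]
  show (∑ t ∈ Finset.range (d + 1), (-(Cmat E)) ^ t) k j = 0
  rw [Matrix.sum_apply]
  exact Finset.sum_eq_zero fun t _ => this t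

lemma closure_L {i k j : Fin d} (hk : k ∈ barPa E i) (h : (1 + Cmat E) k j ≠ 0) :
    j ∈ barPa E i := by
  by_contra hj
  apply h
  have h1 : (1 : Matrix (Fin d) (Fin d) ℝ) k j = 0 := by
    apply Matrix.one_apply_ne; rintro rfl; exact hj hk
  have h2 : Cmat E k j = 0 := by
    by_contra h0; exact hj (closure_dom E hk ((Cmat_ne_zero_iff E).mp h0))
  simp [Matrix.add_apply, h1, h2]

lemma det_L (hG : IsDAG E) : (1 + Cmat E).det = 1 := by
  have hnil : IsNilpotent (Cmat E) := ⟨d + 1, Cpow_eq_zero E hG⟩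
  have hcp : (Cmat E).charpoly = Polynomial.X ^ (Fintype.card (Fin d)) := by
    have h := Matrix.isNilpotent_charpoly_sub_pow_of_isNilpotent hnil
    have := h.eq_zero
    rwa [sub_eq_zero] at this
  have h1 : ((Cmat E).charpoly).eval (-1) = (-1 : ℝ) ^ d := by
    rw [hcp]; simp
  have h2 : ((Cmat E).charpoly).eval (-1) = ((Matrix.scalar (Fin d)) (-1 : ℝ) - Cmat E).det := by
    rw [Matrix.charpoly, eval_det, Matrix.matPolyEquiv_charmatrix]
    simp
  have h3 : (Matrix.scalar (Fin d)) (-1 : ℝ) - Cmat E = -(1 + Cmat E) := by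
    rw [map_neg, _root_.map_one]; abel
  rw [h3, Matrix.det_neg, Fintype.card_fin] at h2
  have h4 : (-1 : ℝ) ^ d * 1 = (-1 : ℝ) ^ d * (1 + Cmat E).det := by
    rw [mul_one]; exact h1.symm.trans h2
  exact (mul_left_cancel₀ (pow_ne_zero _ (by norm_num : (-1:ℝ) ≠ 0)) h4).symm

/-- directional derivative vanishes outside the set of dependence. -/
lemma fderiv_single_eq_zero {d : ℕ} {S : Set (Fin d)} {f : (Fin d → ℝ) → ℝ}
    (hf : DependsOnlyOn S f) {z : Fin d → ℝ} (hd : DifferentiableAt ℝ f z)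
    {k : Fin d} (hk : k ∉ S) : fderiv ℝ f z (Pi.single k 1) = 0 := by
  have hline : HasDerivAt (fun t : ℝ => z + t • (Pi.single k 1 : Fin d → ℝ)) (Pi.single k 1) 0 := by
    simpa using ((hasDerivAt_id (0 : ℝ)).smul_const (Pi.single k 1 : Fin d → ℝ)).const_add z
  have hcomp : HasDerivAt (fun t : ℝ => f (z + t • (Pi.single k 1 : Fin d → ℝ)))
      (fderiv ℝ f z (Pi.single k 1)) 0 := by
    have hd' : HasFDerivAt f (fderiv ℝ f z) (z + (0:ℝ) • (Pi.single k 1 : Fin d → ℝ)) := by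
      simpa using hd.hasFDerivAt
    exact hd'.comp_hasDerivAt 0 hline
  have hconst : (fun t : ℝ => f (z + t • (Pi.single k 1 : Fin d → ℝ))) = fun _ => f z := by
    funext t
    apply hf
    intro j hj
    have hkj : k ≠ j := fun h => hk (h ▸ hj)
    simp [Pi.single_apply, hkj]
  rw [hconst] at hcomp
  exact hcomp.unique (hasDerivAt_const 0 (f z))

end AuxNP

lemma clm_sum_single {d : ℕ} (D : (Fin d → ℝ) →L[ℝ] ℝ) (w : Fin d → ℝ) :
    D w = ∑ k, w k * D (Pi.single k 1) := by
  have hw : w = ∑ k : Fin d, w k • (Pi.single k 1 : Fin d → ℝ) := by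
    funext l
    rw [Finset.sum_apply]
    simp [Pi.single_apply]
  conv_lhs => rw [hw]
  rw [map_sum]
  simp [smul_eq_mul]

/-- Effect-domination ambiguity is unavoidable for non-parametric models
(Theorem 8.2): given a ground-truth model satisfying (i)–(iii), there is a
diffeomorphism `m` whose induced model satisfies (i')–(iii') for the same graph
and partition, yet `∂m_i/∂z_j ≠ 0` everywhere for every `j ∈ \bar{dom}_G(i)`. -/
theorem nonparametric_ambiguity
    {d : ℕ} {ι : Type*} [Fintype ι]
    (E : Fin d → Fin d → Prop) (hG : IsDAG E)
    (part : ι → Fin d)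
    -- the ground-truth conditional factors and joint densities
    (pfac : ι → Fin d → (Fin d → ℝ) → ℝ)
    (hpdep : ∀ e i, DependsOnlyOn (barPa E i) (pfac e i))
    (pJ : ι → (Fin d → ℝ) → ℝ)
    (hpJ : ∀ e z, pJ e z = ∏ i, pfac e i z)
    -- (i) continuously differentiable factors, everywhere-positive joint density
    (hpC1 : ∀ e i, ContDiff ℝ 1 (pfac e i))
    (hppos : ∀ e z, 0 < pJ e z)
    (hpprob : ∀ e, ∫ z : Fin d → ℝ, pJ e z = 1)
    -- (ii) each group `𝔈ᵢ` is a set of single-node soft interventions on node `i`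
    (hint_p : ∀ i : Fin d, ∀ e₁ e₂ : ι, part e₁ = i → part e₂ = i → e₁ ≠ e₂ →
        ∀ j, (pfac e₁ j = pfac e₂ j ↔ j ≠ i))
    -- (iii) non-degeneracy at every point
    (hndp : ∀ i : Fin d, ∃ e₀ : {e : ι // part e = i}, ∀ zhat : Fin d → ℝ,
        NonDegenerateAt E i (fun e : {e : ι // part e = i} => pfac e.1 i) e₀ zhat) :
    ∃ m minv : (Fin d → ℝ) → (Fin d → ℝ),
      ContDiff ℝ 1 m ∧ ContDiff ℝ 1 minv ∧
      Function.LeftInverse minv m ∧ Function.RightInverse minv m ∧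
      ∃ qfac : ι → Fin d → (Fin d → ℝ) → ℝ,
        -- (i') factorization over the SAME graph `G`, C¹ factors, positive joint
        (∀ e i, DependsOnlyOn (barPa E i) (qfac e i)) ∧
        (∀ e i, ContDiff ℝ 1 (qfac e i)) ∧
        (∀ e (v : Fin d → ℝ), 0 < ∏ i, qfac e i v) ∧
        -- `q_E` is the density of `v = m(z)`: change of variables
        (∀ e (z : Fin d → ℝ),
          (∏ i, qfac e i (m z)) * |((fderiv ℝ m z).toLinearMap).det| = pJ e z) ∧
        -- (ii') single-node soft interventions for the same partition
        (∀ i : Fin d, ∀ e₁ e₂ : ι, part e₁ = i → part e₂ = i → e₁ ≠ e₂ →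
            ∀ j, (qfac e₁ j = qfac e₂ j ↔ j ≠ i)) ∧
        -- (iii') non-degeneracy at every point
        (∀ i : Fin d, ∃ e₀ : {e : ι // part e = i}, ∀ vhat : Fin d → ℝ,
            NonDegenerateAt E i (fun e : {e : ι // part e = i} => qfac e.1 i) e₀ vhat) ∧
        -- (iv) the effect-domination ambiguity is realized
        (∀ i j, j ∈ barDom E i → ∀ z : Fin d → ℝ,
            fderiv ℝ (fun w => m w i) z (Pi.single j 1) ≠ 0) := by
  classical
  set L : Matrix (Fin d) (Fin d) ℝ := 1 + Cmat E with hLdef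
  set N : Matrix (Fin d) (Fin d) ℝ := Nmat E with hNdef
  have hNL : N * L = 1 := Nmat_mul E hG
  have hLN : L * N = 1 := mul_Nmat E hG
  let Lcl : (Fin d → ℝ) →L[ℝ] (Fin d → ℝ) := LinearMap.toContinuousLinearMap (Matrix.toLin' L)
  let Ncl : (Fin d → ℝ) →L[ℝ] (Fin d → ℝ) := LinearMap.toContinuousLinearMap (Matrix.toLin' N)
  have hLclApp : ∀ z, Lcl z = L.mulVec z := fun z => by
    simp [Lcl, Matrix.toLin'_apply]
  have hNclApp : ∀ v, Ncl v = N.mulVec v := fun v => by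
    simp [Ncl, Matrix.toLin'_apply]
  have hLfun : (fun z : Fin d → ℝ => L.mulVec z) = ⇑Lcl := by
    funext z; rw [hLclApp]
  have hNfun : (fun v : Fin d → ℝ => N.mulVec v) = ⇑Ncl := by
    funext v; rw [hNclApp]
  have hNLvec : ∀ z : Fin d → ℝ, N.mulVec (L.mulVec z) = z := fun z => by
    rw [Matrix.mulVec_mulVec, hNL, Matrix.one_mulVec]
  have hLNvec : ∀ v : Fin d → ℝ, L.mulVec (N.mulVec v) = v := fun v => by
    rw [Matrix.mulVec_mulVec, hLN, Matrix.one_mulVec]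
  refine ⟨fun z => L.mulVec z, fun v => N.mulVec v, ?_, ?_, hNLvec, hLNvec,
    fun e i v => pfac e i (N.mulVec v), ?_, ?_, ?_, ?_, ?_, ?_, ?_⟩
  · rw [hLfun]; exact Lcl.contDiff
  · rw [hNfun]; exact Ncl.contDiff
  -- (i'a) DependsOnlyOn
  · intro e i z z' hag
    apply hpdep e i
    intro k hk
    show N.mulVec z k = N.mulVec z' k
    simp only [Matrix.mulVec, dotProduct]
    refine Finset.sum_congr rfl fun j _ => ?_
    by_cases hj : N k j = 0
    · rw [hj, zero_mul, zero_mul]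
    · rw [hag j (closure_N E hk hj)]
  -- (i'b) ContDiff
  · intro e i
    have hNcd : ContDiff ℝ 1 (fun v : Fin d → ℝ => N.mulVec v) := by
      rw [hNfun]; exact Ncl.contDiff
    exact (hpC1 e i).comp hNcd
  -- (i'c) positivity
  · intro e v
    have := hppos e (N.mulVec v)
    rwa [hpJ] at this
  -- change of variables
  · intro e z
    have h1 : ∏ i, pfac e i (N.mulVec (L.mulVec z)) = pJ e z := by
      rw [hNLvec, hpJ]
    have h2 : fderiv ℝ (fun z : Fin d → ℝ => L.mulVec z) z = Lcl := by
      rw [hLfun]; exact Lcl.fderiv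
    have h3 : (Lcl : (Fin d → ℝ) →L[ℝ] (Fin d → ℝ)).toLinearMap = Matrix.toLin' L := rfl
    rw [h1, h2, h3, LinearMap.det_toLin', hLdef, det_L E hG]
    norm_num
  -- (ii') single-node soft interventions
  · intro i e₁ e₂ h1 h2 hne j
    have key : ∀ (f g : (Fin d → ℝ) → ℝ),
        ((fun v => f (N.mulVec v)) = fun v => g (N.mulVec v)) ↔ f = g := by
      intro f g
      constructor
      · intro h
        funext z
        have := congrFun h (L.mulVec z)
        simpa [hNLvec z] using this
      · intro h; rw [h]
    exact (key _ _).trans (hint_p i e₁ e₂ h1 h2 hne j)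
  -- (iii') non-degeneracy
  · intro i
    obtain ⟨e₀, he₀⟩ := hndp i
    refine ⟨e₀, fun vhat => ?_⟩
    set zhat : Fin d → ℝ := N.mulVec vhat with hzhat
    obtain ⟨hpos, hspan⟩ := he₀ zhat
    haveI : Fintype ↥(barPa E i) := (Set.toFinite _).fintype
    constructor
    · intro e; exact hpos e
    · -- span condition
      set S := barPa E i with hS
      let D : {e : ι // part e = i} → (Fin d → ℝ) →L[ℝ] ℝ :=
        fun e => fderiv ℝ (fun z => pfac e₀.1 i z / pfac e.1 i z) zhat
      have hdiff : ∀ e : {e : ι // part e = i},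
          DifferentiableAt ℝ (fun z => pfac e₀.1 i z / pfac e.1 i z) zhat := by
        intro e
        have h1 : DifferentiableAt ℝ (pfac e₀.1 i) zhat := ((hpC1 _ i).differentiable one_ne_zero) zhat
        have h2 : DifferentiableAt ℝ (pfac e.1 i) zhat := ((hpC1 _ i).differentiable one_ne_zero) zhat
        have h3 : pfac e.1 i zhat ≠ 0 := ne_of_gt (hpos e)
        have h4 : (fun z => pfac e₀.1 i z / pfac e.1 i z)
            = fun z => pfac e₀.1 i z * (pfac e.1 i z)⁻¹ := by
          funext z; rw [div_eq_mul_inv]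
        rw [h4]
        exact h1.mul (h2.inv h3)
      have hdep : ∀ e : {e : ι // part e = i},
          DependsOnlyOn S (fun z => pfac e₀.1 i z / pfac e.1 i z) := by
        intro e z z' h
        show pfac e₀.1 i z / pfac e.1 i z = pfac e₀.1 i z' / pfac e.1 i z'
        rw [hpdep e₀.1 i z z' h, hpdep e.1 i z z' h]
      have hker : ∀ (e : {e : ι // part e = i}) (k : Fin d), k ∉ S →
          D e (Pi.single k 1) = 0 := fun e k hk =>
        fderiv_single_eq_zero (hdep e) (hdiff e) hk
      have hq : ∀ e : {e : ι // part e = i},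
          fderiv ℝ (fun v => pfac e₀.1 i (N.mulVec v) / pfac e.1 i (N.mulVec v)) vhat
            = (D e).comp Ncl := by
        intro e
        have h1 : HasFDerivAt (fun z => pfac e₀.1 i z / pfac e.1 i z) (D e) (Ncl vhat) := by
          rw [hNclApp, ← hzhat]; exact (hdiff e).hasFDerivAt
        have h4 : (fun v => pfac e₀.1 i (N.mulVec v) / pfac e.1 i (N.mulVec v))
            = (fun z => pfac e₀.1 i z / pfac e.1 i z) ∘ ⇑Ncl := by
          funext v; simp [Function.comp, hNclApp]
        rw [h4]
        exact (h1.comp vhat Ncl.hasFDerivAt).fderiv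
      -- restriction of sums
      have hsum : ∀ (f : Fin d → ℝ), (∀ k, k ∉ S → f k = 0) →
          ∑ k : ↥S, f ↑k = ∑ k : Fin d, f k := by
        intro f hf
        rw [Finset.sum_set_coe (f := f)]
        exact Finset.sum_subset (Finset.subset_univ _)
          (fun k _ hk => hf k (by simpa [Set.mem_toFinset] using hk))
      let A : Matrix ↥S ↥S ℝ := fun j k => N ↑k ↑j
      let B : Matrix ↥S ↥S ℝ := fun j k => L ↑k ↑j
      have hAB : A * B = 1 := by
        ext j l
        rw [Matrix.mul_apply]
        have hvan : ∀ k, k ∉ S → L ↑l k * N k ↑j = 0 := by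
          intro k hk
          have : L ↑l k = 0 := by
            by_contra h0
            exact hk (closure_L E l.2 h0)
          rw [this, zero_mul]
        have h5 : ∑ k : ↥S, A j k * B k l = ∑ k : Fin d, L ↑l k * N k ↑j := by
          rw [← hsum (fun k' => L ↑l k' * N k' ↑j) hvan]
          exact Finset.sum_congr rfl fun k _ => mul_comm _ _
        rw [h5, ← Matrix.mul_apply, hLN]
        by_cases h : (l : Fin d) = ↑j
        · have h' : j = l := Subtype.ext h.symm
          simp [h, h', Matrix.one_apply]
        · have h' : j ≠ l := fun hh => h (by rw [hh])
          simp [Matrix.one_apply, h, h']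
      let V : {e : ι // part e = i} → (↥S → ℝ) :=
        fun e => fun j : ↥S => D e (Pi.single (j : Fin d) 1)
      have hspan' : Submodule.span ℝ (Set.range V) = ⊤ := hspan
      show Submodule.span ℝ (Set.range fun e : {e : ι // part e = i} =>
        fun j : ↥S => fderiv ℝ
          (fun v => pfac e₀.1 i (N.mulVec v) / pfac e.1 i (N.mulVec v)) vhat
          (Pi.single (j : Fin d) 1)) = ⊤
      have hW : (fun e : {e : ι // part e = i} =>
          fun j : ↥S => fderiv ℝ
            (fun v => pfac e₀.1 i (N.mulVec v) / pfac e.1 i (N.mulVec v)) vhat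
            (Pi.single (j : Fin d) 1)) = ⇑(Matrix.mulVecLin A) ∘ V := by
        funext e
        funext j
        rw [hq e]
        show D e (Ncl (Pi.single (j : Fin d) 1)) = (A.mulVec (V e)) j
        rw [hNclApp, Matrix.mulVec_single]
        have hcol : (MulOpposite.op (1:ℝ) • N.col ↑j) = (fun k => N k ↑j * 1) := by
          ext k; simp [Matrix.col_apply, op_smul_eq_mul]
        rw [hcol]
        have hrep : D e (fun k => N k ↑j * 1) = ∑ k : Fin d, (N k ↑j * 1) * D e (Pi.single k 1) :=
          clm_sum_single (D e) _
        rw [hrep, Matrix.mulVec, dotProduct]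
        have hvan : ∀ k, k ∉ S → N k ↑j * 1 * D e (Pi.single k 1) = 0 := by
          intro k hk
          rw [hker e k hk, mul_zero]
        rw [← hsum (fun k' => N k' ↑j * 1 * D e (Pi.single k' 1)) hvan]
        exact (Finset.sum_congr rfl fun k _ => by
          show A j k * V e k = N ↑k ↑j * 1 * D e (Pi.single (↑k) 1)
          simp [A, V]).symm
      rw [hW, Set.range_comp, Submodule.span_image, hspan', Submodule.map_top,
        LinearMap.range_eq_top]
      intro y
      exact ⟨B.mulVec y, by rw [Matrix.mulVecLin_apply, Matrix.mulVec_mulVec, hAB,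
        Matrix.one_mulVec]⟩
  -- (iv) ambiguity realized
  · intro i j hj z
    have h1 : (fun w : Fin d → ℝ => L.mulVec w i)
        = ⇑((ContinuousLinearMap.proj (R := ℝ) (φ := fun _ : Fin d => ℝ) i).comp Lcl) := by
      funext w; simp [hLclApp]
    rw [h1, ContinuousLinearMap.fderiv]
    show ((ContinuousLinearMap.proj (R := ℝ) (φ := fun _ : Fin d => ℝ) i).comp Lcl)
      (Pi.single j 1) ≠ 0
    rw [ContinuousLinearMap.comp_apply]
    show Lcl (Pi.single j 1) i ≠ 0
    rw [hLclApp, Matrix.mulVec_single]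
    simp only [Pi.smul_apply, Matrix.col_apply, op_smul_eq_mul, mul_one]
    have hCii : ∀ k, Cmat E k k = 0 := by
      intro k
      have : k ∉ domSet E k := fun h => no_self_edge E hG k h.1
      simp [Cmat, this]
    rcases hj with hj | hj
    · subst hj
      rw [hLdef]
      simp [Matrix.add_apply, Matrix.one_apply_eq, hCii]
    · have hji : j ≠ i := by
        rintro rfl
        exact no_self_edge E hG j hj.1
      rw [hLdef]
      have : Cmat E i j = 1 := by simp [Cmat, hj]
      simp [Matrix.add_apply, Matrix.one_apply_ne (Ne.symm hji), this]
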